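/- If C : X → GL(d,ℝ) is a conjugacy between the cocycles 𝒜ᴺ and ℬᴺ over fᴺ and also a conjugacy between 𝒜ᴷ and ℬᴷ over fᴷ, where N and K are coprime positive integers, then C is a conjugacy between 𝒜 and ℬ over f. -/

import Mathlib

/-- The iterates of a `GL(d,ℝ)`-valued cocycle over `f`. -/
def cocycleIter {X : Type*} {d : ℕ} (f : X → X) (A : X → GL (Fin d) ℝ) :
    ℕ → X → GL (Fin d) ℝ
  | 0, _ => 1
  | n + 1, x => A (f^[n] x) * cocycleIter f A n x

lemma cocycleIter_add {X : Type*} {d : ℕ} (f : X → X) (A : X → GL (Fin d) ℝ)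
    (m n : ℕ) (x : X) :
    cocycleIter f A (m + n) x = cocycleIter f A m (f^[n] x) * cocycleIter f A n x := by
  induction m with
  | zero => simp [cocycleIter]
  | succ m ih =>
      have : m + 1 + n = m + n + 1 := by omega
      rw [this]
      simp only [cocycleIter, ih, ← Function.iterate_add_apply, mul_assoc]

section
variable {X : Type*} {d : ℕ} (f : X → X) (A B C : X → GL (Fin d) ℝ)

def IsConj' (n : ℕ) : Prop :=
  ∀ x, cocycleIter f A n x = C (f^[n] x) * cocycleIter f B n x * (C x)⁻¹

lemma isConj'_add {m n : ℕ} (hm : IsConj' f A B C m) (hn : IsConj' f A B C n) :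
    IsConj' f A B C (m + n) := by
  intro x
  rw [cocycleIter_add, cocycleIter_add, hm, hn, Function.iterate_add_apply]
  group

lemma isConj'_mul {n : ℕ} (hn : IsConj' f A B C n) (k : ℕ) :
    IsConj' f A B C (k * n) := by
  induction k with
  | zero => intro x; simp [cocycleIter]
  | succ k ih =>
      have : (k + 1) * n = k * n + n := by ring
      rw [this]
      exact isConj'_add f A B C ih hn

end

/-- If `C` is a conjugacy between the cocycles `𝒜ᴺ` and `ℬᴺ` over `fᴺ` and also between
`𝒜ᴷ` and `ℬᴷ` over `fᴷ`, where `N` and `K` are coprime positive integers, then `C` is a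
conjugacy between `𝒜` and `ℬ` over `f`. -/
theorem stmt4 {X : Type*} {d : ℕ} (f : X → X) (hf : Function.Bijective f)
    (A B C : X → GL (Fin d) ℝ) (N K : ℕ) (hN : 1 ≤ N) (hK : 1 ≤ K)
    (hco : Nat.Coprime N K)
    (hCN : ∀ x, cocycleIter f A N x = C (f^[N] x) * cocycleIter f B N x * (C x)⁻¹)
    (hCK : ∀ x, cocycleIter f A K x = C (f^[K] x) * cocycleIter f B K x * (C x)⁻¹) :
    ∀ x, A x = C (f x) * B x * (C x)⁻¹ := by
  -- find a b with a * N = b * K + 1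
  obtain ⟨a, b, hab⟩ : ∃ a b : ℕ, a * N = b * K + 1 := by
    rcases eq_or_lt_of_le hK with h1 | h1
    · exact ⟨1, N - 1, by subst h1; omega⟩
    · obtain ⟨m, -, hm⟩ := Nat.exists_mul_mod_eq_one_of_coprime hco h1
      refine ⟨m, N * m / K, ?_⟩
      have h := Nat.div_add_mod (N * m) K
      rw [Nat.mul_comm m N, Nat.mul_comm (N * m / K) K]
      omega
  have hA : IsConj' f A B C (b * K + 1) := by
    rw [← hab]; exact isConj'_mul f A B C hCN a
  have hB : IsConj' f A B C (b * K) := isConj'_mul f A B C hCK b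
  intro y
  obtain ⟨x, hx⟩ : ∃ x, f^[b * K] x = y :=
    (Function.Bijective.iterate hf (b * K)).surjective y
  have h1 := hA x
  have h2 := hB x
  have e1 : cocycleIter f A (b * K + 1) x = A y * cocycleIter f A (b * K) x := by
    simp [cocycleIter, hx]
  have e2 : cocycleIter f B (b * K + 1) x = B y * cocycleIter f B (b * K) x := by
    simp [cocycleIter, hx]
  have e3 : f^[b * K + 1] x = f y := by
    rw [Function.iterate_succ_apply', hx]
  rw [e1, e2, e3, h2, hx] at h1
  apply mul_right_cancel (b := C y * cocycleIter f B (b * K) x * (C x)⁻¹)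
  rw [h1]; group
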